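/- Let T be a strongly connected tournament of order n ≥ 4, and let T_ncr be the subtournament induced by the set of non-critical vertices of T. If T_ncr is strongly connected, then either T = T_ncr, or T is the composition Δ(v_1,v_2,T_ncr) of the cyclic triple in which one vertex has been replaced by T_ncr (i.e., there are two vertices v_1,v_2 with v_1 → v_2, every vertex of T_ncr dominates v_1, and v_2 dominates every vertex of T_ncr). If T_ncr is not strongly connected, then T_ncr is not contained in any proper strongly connected subtournament of T. -/

import Mathlib

/-- A tournament on a vertex type `V`: every ordered pair of distinct vertices
carries exactly one arc. `adj v w = true` means there is an arc from `v` to `w`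
(`v` dominates `w`). -/
structure Tournament (V : Type*) where
  adj : V → V → Bool
  irrefl : ∀ v, adj v v = false
  compl : ∀ v w, v ≠ w → adj v w = !adj w v

namespace Tournament

variable {V : Type*} {W : Type*}

/-- The subtournament induced on a set of vertices. -/
def restrict (T : Tournament V) (s : Set V) : Tournament s where
  adj a b := T.adj a b
  irrefl a := T.irrefl a
  compl a b h := T.compl a b (fun hab => h (Subtype.ext hab))

/-- A tournament is strongly connected if every vertex can be reached from
every other one by a directed path. -/
def Strong (T : Tournament V) : Prop :=
  ∀ v w : V, Relation.ReflTransGen (fun a b => T.adj a b = true) v w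

/-- A vertex of a tournament is non-critical if deleting it leaves a strongly
connected tournament. -/
def Noncritical (T : Tournament V) (w : V) : Prop :=
  (T.restrict {x | x ≠ w}).Strong

/-- There is a directed walk of length `k` from `v` to `w`. -/
def HasWalk (T : Tournament V) (v w : V) (k : ℕ) : Prop :=
  ∃ f : Fin (k + 1) → V, f 0 = v ∧ f (Fin.last k) = w ∧
    ∀ i : Fin k, T.adj (f i.castSucc) (f i.succ) = true

/-- The distance from `v` to `w`: the length of a shortest directed path. -/
noncomputable def dist (T : Tournament V) (v w : V) : ℕ :=
  sInf {k | T.HasWalk v w k}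

/-- The diameter: the maximum distance over ordered pairs of distinct vertices. -/
noncomputable def diam (T : Tournament V) : ℕ :=
  sSup {m | ∃ v w : V, v ≠ w ∧ T.dist v w = m}

/-- Cyclic successor on `Fin ℓ`. -/
def cyc {ℓ : ℕ} (i : Fin ℓ) : Fin ℓ :=
  if h : i.val + 1 < ℓ then ⟨i.val + 1, h⟩ else ⟨0, i.pos⟩

/-- The number of circuits (directed cycles through distinct vertices) of
length `ℓ` in `T`.  Each circuit is represented by exactly `ℓ` cyclic
parametrisations, whence the division. -/
noncomputable def circCount (T : Tournament V) (ℓ : ℕ) : ℕ :=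
  Nat.card {f : Fin ℓ → V // Function.Injective f ∧
    ∀ i : Fin ℓ, T.adj (f i) (f (cyc i)) = true} / ℓ

/-- The number of circuits of length `ℓ` in `T` passing through the vertex `w`. -/
noncomputable def circCountAt (T : Tournament V) (ℓ : ℕ) (w : V) : ℕ :=
  Nat.card {f : Fin ℓ → V // Function.Injective f ∧
    (∀ i : Fin ℓ, T.adj (f i) (f (cyc i)) = true) ∧ ∃ i, f i = w} / ℓ

/-- The number of strongly connected subtournaments of order `ℓ` in `T`. -/
noncomputable def strongSubCount (T : Tournament V) (ℓ : ℕ) : ℕ :=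
  Nat.card {s : Finset V // s.card = ℓ ∧ (T.restrict ↑s).Strong}

/-- Isomorphism of tournaments. -/
def Iso (T : Tournament V) (S : Tournament W) : Prop :=
  ∃ e : V ≃ W, ∀ a b : V, T.adj a b = S.adj (e a) (e b)

/-- Build a tournament from the function `f` recording which arcs point
"upwards" with respect to a linear order on the vertices. -/
def ofFn [LinearOrder V] (f : V → V → Bool) : Tournament V where
  adj u v := if u < v then f u v else if v < u then !f v u else false
  irrefl v := by simp
  compl u v h := by
    rcases lt_trichotomy u v with h1 | h1 | h1
    · simp [h1, not_lt_of_gt h1]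
    · exact absurd h1 h
    · simp [h1, not_lt_of_gt h1]

/-- The tournament `T_{n-1,n}(z_0,…,z_{n-1})`: `z_i → z_{i+1}` and `z_j → z_i`
for `j > i + 1`. -/
def lineT (n : ℕ) : Tournament (Fin n) :=
  ofFn fun i j => decide (j.val = i.val + 1)

end Tournament





namespace Tournament

open Relation

variable {V : Type*}

/-- Arc relation within a set, at the level of `V`. -/
def Rel (T : Tournament V) (s : Set V) (p q : V) : Prop :=
  p ∈ s ∧ q ∈ s ∧ T.adj p q = true

variable {T : Tournament V}

lemma adj_asymm {p q : V} (h : T.adj p q = true) : T.adj q p = false := by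
  rcases eq_or_ne q p with rfl | hne
  · exact absurd h (by simp [T.irrefl])
  · rw [T.compl q p hne, h]; rfl

lemma adj_of_ne_of_not {p q : V} (hne : p ≠ q) (h : T.adj p q = false) :
    T.adj q p = true := by
  rw [T.compl q p hne.symm, h]; rfl

lemma ne_of_adj {p q : V} (h : T.adj p q = true) : p ≠ q := by
  rintro rfl; simp [T.irrefl] at h

/-- Closure principle for reachability. -/
lemma closure {r : V → V → Prop} (P : V → Prop)
    (hcl : ∀ u w, P u → r u w → P w) {v w : V}
    (h : ReflTransGen r v w) (hv : P v) : P w := by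
  induction h with
  | refl => exact hv
  | tail _ h2 ih => exact hcl _ _ ih h2

lemma rel_toSubtype {s : Set V} {v w : V}
    (h : ReflTransGen (T.Rel s) v w) (hv : v ∈ s) :
    ∀ hw : w ∈ s,
      ReflTransGen (fun a b : s => (T.restrict s).adj a b = true) ⟨v, hv⟩ ⟨w, hw⟩ := by
  induction h with
  | refl => exact fun hw => ReflTransGen.refl
  | tail h1 h2 ih => exact fun hw => (ih h2.1).tail h2.2.2

lemma strong_restrict_iff {s : Set V} :
    (T.restrict s).Strong ↔ ∀ v ∈ s, ∀ w ∈ s, ReflTransGen (T.Rel s) v w := by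
  constructor
  · intro h v hv w hw
    exact ReflTransGen.lift (p := T.Rel s) Subtype.val (fun (a b : s) (hab : (T.restrict s).adj a b = true) => show T.Rel s a.1 b.1 from ⟨a.2, b.2, hab⟩) _ _ (h ⟨v, hv⟩ ⟨w, hw⟩)
  · intro h v w
    exact rel_toSubtype (h v v.2 w w.2) v.2 w.2

lemma exists_in_arc (hT : T.Strong) {b u : V} (hub : u ≠ b) :
    ∃ w, w ≠ b ∧ T.adj w b = true := by
  rcases (hT u b).cases_tail with h | ⟨c, _, hc⟩
  · exact absurd h.symm hub
  · exact ⟨c, ne_of_adj hc, hc⟩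

lemma exists_out_arc (hT : T.Strong) {b u : V} (hub : u ≠ b) :
    ∃ w, w ≠ b ∧ T.adj b w = true := by
  rcases (hT b u).cases_head with h | ⟨c, hc, _⟩
  · exact absurd h hub.symm
  · exact ⟨c, (ne_of_adj hc).symm, hc⟩


open Relation
variable {V : Type*} {T : Tournament V}

/-- A critical vertex yields a dominated partition of the rest. -/
lemma crit_structure (ha : ¬ T.Noncritical a) :
    ∃ X Y : Set V, X.Nonempty ∧ Y.Nonempty ∧ X ∩ Y = ∅ ∧
      X ∪ Y = {u | u ≠ a} ∧ ∀ x ∈ X, ∀ y ∈ Y, T.adj x y = true := by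
  unfold Noncritical at ha
  rw [strong_restrict_iff] at ha
  push_neg at ha
  obtain ⟨v, hv, w, hw, hnr⟩ := ha
  refine ⟨{u | u ≠ a ∧ ¬ ReflTransGen (T.Rel {x | x ≠ a}) v u},
          {u | u ≠ a ∧ ReflTransGen (T.Rel {x | x ≠ a}) v u}, ⟨w, hw, hnr⟩,
          ⟨v, hv, ReflTransGen.refl⟩, ?_, ?_, ?_⟩
  · ext u; simp only [Set.mem_inter_iff, Set.mem_setOf_eq, Set.mem_empty_iff_false, iff_false]
    tauto
  · ext u; simp only [Set.mem_union, Set.mem_setOf_eq]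
    tauto
  · rintro x ⟨hxa, hxr⟩ y ⟨hya, hyr⟩
    have hxy : x ≠ y := by rintro rfl; exact hxr hyr
    refine adj_of_ne_of_not hxy.symm ?_
    by_contra h
    have : T.adj y x = true := by
      cases hyx : T.adj y x
      · exact absurd hyx h
      · rfl
    exact hxr (hyr.tail ⟨hya, hxa, this⟩)

/-- A strong set avoiding `a` lies on one side of a dominated partition. -/
lemma strong_sub_side {S X Y : Set V} (hS : (T.restrict S).Strong)
    (hsub : S ⊆ X ∪ Y) (hdisj : X ∩ Y = ∅)
    (hdom : ∀ x ∈ X, ∀ y ∈ Y, T.adj x y = true) : S ⊆ X ∨ S ⊆ Y := by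
  by_cases hx : ∃ s ∈ S, s ∈ X
  · left
    obtain ⟨s1, hs1S, hs1X⟩ := hx
    intro s2 hs2
    rcases hsub hs2 with h | h
    · exact h
    · exfalso
      have hpath := (strong_restrict_iff.mp hS) s2 hs2 s1 hs1S
      have : s1 ∈ S ∧ s1 ∈ Y := by
        refine closure (fun u => u ∈ S ∧ u ∈ Y) ?_ hpath ⟨hs2, h⟩
        rintro u u' ⟨huS, huY⟩ ⟨_, hu'S, hadj⟩
        refine ⟨hu'S, ?_⟩
        rcases hsub hu'S with h' | h'
        · exact absurd hadj (by simp [adj_asymm (hdom u' h' u huY)])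
        · exact h'
      exact Set.eq_empty_iff_forall_notMem.mp hdisj s1 ⟨hs1X, this.2⟩
  · right
    intro s hs
    rcases hsub hs with h | h
    · exact absurd ⟨s, hs, h⟩ hx
    · exact h



/-- In the Δ-configuration every vertex of `S` is non-critical. -/
lemma delta_noncrit {n : ℕ} (hn : 4 ≤ n) (hcard : Nat.card V = n)
    {S : Set V} {v1 v2 : V} (h1 : v1 ∉ S) (h2 : v2 ∉ S) (hne : v1 ≠ v2)
    (huniv : ∀ u, u ∈ S ∨ u = v1 ∨ u = v2) (h12 : T.adj v1 v2 = true)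
    (harc : ∀ s ∈ S, T.adj s v1 = true ∧ T.adj v2 s = true) :
    ∀ x ∈ S, T.Noncritical x := by
  intro x hx
  -- find another vertex of S
  obtain ⟨s', hs'S, hs'x⟩ : ∃ s' ∈ S, s' ≠ x := by
    by_contra h
    push_neg at h
    have hsub : (Set.univ : Set V) ⊆ {x, v1, v2} := by
      intro u _
      rcases huniv u with hu | hu | hu
      · simp [h u hu]
      · simp [hu]
      · simp [hu]
    have h3 : ({x, v1, v2} : Set V).ncard ≤ 3 := by
      calc ({x, v1, v2} : Set V).ncard ≤ ({v1, v2} : Set V).ncard + 1 :=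
            Set.ncard_insert_le _ _
        _ ≤ (({v2} : Set V).ncard + 1) + 1 := by
            have := Set.ncard_insert_le v1 ({v2} : Set V); omega
        _ ≤ 3 := by simp
    have hle : (Set.univ : Set V).ncard ≤ ({x, v1, v2} : Set V).ncard :=
      Set.ncard_le_ncard hsub (Set.toFinite _)
    rw [Set.ncard_univ, hcard] at hle
    omega
  have hv1 : v1 ∈ {y | y ≠ x} := fun h => h1 (h ▸ hx)
  have hv2 : v2 ∈ {y | y ≠ x} := fun h => h2 (h ▸ hx)
  have hs' : s' ∈ {y | y ≠ x} := hs'x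
  unfold Noncritical
  rw [strong_restrict_iff]
  have to_v1 : ∀ u ∈ {y | y ≠ x}, ReflTransGen (T.Rel {y | y ≠ x}) u v1 := by
    intro u hu
    rcases huniv u with h | h | h
    · exact ReflTransGen.single ⟨hu, hv1, (harc u h).1⟩
    · subst h; exact ReflTransGen.refl
    · subst h
      exact ReflTransGen.head ⟨hu, hs', (harc s' hs'S).2⟩
        (ReflTransGen.single ⟨hs', hv1, (harc s' hs'S).1⟩)
  have from_v1 : ∀ u ∈ {y | y ≠ x}, ReflTransGen (T.Rel {y | y ≠ x}) v1 u := by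
    intro u hu
    rcases huniv u with h | h | h
    · exact ReflTransGen.head ⟨hv1, hv2, h12⟩
        (ReflTransGen.single ⟨hv2, hu, (harc u h).2⟩)
    · subst h; exact ReflTransGen.refl
    · subst h; exact ReflTransGen.single ⟨hv1, hv2, h12⟩
  exact fun v hv w hw => (to_v1 v hv).trans (from_v1 w hw)



lemma cycle3_strong {a b c : V} (h1 : T.adj a b = true) (h2 : T.adj b c = true)
    (h3 : T.adj c a = true) : (T.restrict {a, b, c}).Strong := by
  rw [strong_restrict_iff]
  have ha : a ∈ ({a, b, c} : Set V) := by simp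
  have hb : b ∈ ({a, b, c} : Set V) := by simp
  have hc : c ∈ ({a, b, c} : Set V) := by simp
  have to_a : ∀ u ∈ ({a, b, c} : Set V), ReflTransGen (T.Rel {a, b, c}) u a := by
    intro u hu
    rcases hu with h | h | h
    · subst h; exact ReflTransGen.refl
    · subst h; exact ReflTransGen.head ⟨hb, hc, h2⟩ (ReflTransGen.single ⟨hc, ha, h3⟩)
    · subst h; exact ReflTransGen.single ⟨hc, ha, h3⟩
  have from_a : ∀ u ∈ ({a, b, c} : Set V), ReflTransGen (T.Rel {a, b, c}) a u := by
    intro u hu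
    rcases hu with h | h | h
    · subst h; exact ReflTransGen.refl
    · subst h; exact ReflTransGen.single ⟨ha, hb, h1⟩
    · subst h; exact ReflTransGen.head ⟨ha, hb, h1⟩ (ReflTransGen.single ⟨hb, hc, h2⟩)
  exact fun v hv w hw => (to_a v hv).trans (from_a w hw)

lemma mem_classify {a : V} {X Y : Set V} (hXY : X ∪ Y = {u | u ≠ a}) (u : V) :
    u = a ∨ u ∈ X ∨ u ∈ Y := by
  rcases eq_or_ne u a with h | h
  · exact Or.inl h
  · have : u ∈ X ∪ Y := hXY ▸ h
    exact Or.inr this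

/-- From a critical vertex, an out-arc into the top part exists. -/
lemma crit_out_arc (hT : T.Strong) {a : V} {X Y : Set V}
    (hXne : X.Nonempty) (hYne : Y.Nonempty) (hdisj : X ∩ Y = ∅)
    (hXY : X ∪ Y = {u | u ≠ a}) (hdom : ∀ x ∈ X, ∀ y ∈ Y, T.adj x y = true) :
    ∃ x0 ∈ X, T.adj a x0 = true := by
  by_contra h
  push_neg at h
  have hax : ∀ x ∈ X, T.adj a x = false := by
    intro x hx
    cases hv : T.adj a x
    · rfl
    · exact absurd hv (h x hx)
  obtain ⟨x, hx⟩ := hXne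
  obtain ⟨y, hy⟩ := hYne
  have hyX : y ∉ X := fun h' => Set.eq_empty_iff_forall_notMem.mp hdisj y ⟨h', hy⟩
  have : x ∉ X := by
    refine closure (fun u => u ∉ X) ?_ (hT y x) hyX
    intro u w hu hadj hwX
    rcases mem_classify hXY u with h' | h' | h'
    · subst h'; rw [hax w hwX] at hadj; exact Bool.false_ne_true hadj
    · exact hu h'
    · rw [adj_asymm (hdom w hwX u h')] at hadj; exact Bool.false_ne_true hadj
  exact this hx

lemma crit_in_arc (hT : T.Strong) {a : V} {X Y : Set V}
    (hYne : Y.Nonempty) (hdisj : X ∩ Y = ∅)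
    (hXY : X ∪ Y = {u | u ≠ a}) (hdom : ∀ x ∈ X, ∀ y ∈ Y, T.adj x y = true) :
    ∃ y0 ∈ Y, T.adj y0 a = true := by
  by_contra h
  push_neg at h
  have hya : ∀ y ∈ Y, T.adj y a = false := by
    intro y hy
    cases hv : T.adj y a
    · rfl
    · exact absurd hv (h y hy)
  obtain ⟨y, hy⟩ := hYne
  have : a ∈ Y := by
    refine closure (fun u => u ∈ Y) ?_ (hT y a) hy
    intro u w hu hadj
    rcases mem_classify hXY w with h' | h' | h'
    · subst h'; rw [hya u hu] at hadj; exact absurd hadj Bool.false_ne_true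
    · rw [adj_asymm (hdom w h' u hu)] at hadj; exact absurd hadj Bool.false_ne_true
    · exact h'
  have : a ∈ X ∪ Y := Or.inr this
  rw [hXY] at this
  exact this rfl



lemma grow {n : ℕ} (hn : 4 ≤ n) (hcard : Nat.card V = n) (hT : T.Strong)
    {S : Set V} (hS : (T.restrict S).Strong)
    (hA3 : 3 ≤ Sᶜ.ncard) (hcrit : ∀ a, a ∉ S → ¬ T.Noncritical a) :
    ∃ S' : Set V, S ⊆ S' ∧ (∃ t, t ∈ S' ∧ t ∉ S) ∧ (T.restrict S').Strong ∧
      S'ᶜ.ncard < Sᶜ.ncard ∧ S' ≠ Set.univ := by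
  haveI : Finite V := (Nat.card_pos_iff.mp (by omega)).2
  have hproper : ∀ S' : Set V, S'ᶜ.ncard ≠ 0 → S' ≠ Set.univ := by
    intro S' h
    exact Set.nonempty_compl.mp (Set.nonempty_of_ncard_ne_zero h)
  have hlt : ∀ S' : Set V, S ⊆ S' → ∀ t, t ∈ S' → t ∉ S → S'ᶜ.ncard < Sᶜ.ncard := by
    intro S' hsub t ht htS
    refine Set.ncard_lt_ncard ⟨fun u hu hS' => hu (hsub hS'), fun heq => ?_⟩ (Set.toFinite _)
    exact (heq htS) ht
  rcases Set.eq_empty_or_nonempty S with rfl | ⟨s0, hs0⟩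
  · -- S empty: find a 3-cycle
    have : Nonempty V := (Nat.card_pos_iff.mp (by omega)).1
    obtain ⟨a⟩ := this
    obtain ⟨X, Y, hXne, hYne, hdisj, hXY, hdom⟩ :=
      crit_structure (T := T) (hcrit a (by simp))
    obtain ⟨x0, hx0, hax0⟩ := crit_out_arc hT hXne hYne hdisj hXY hdom
    obtain ⟨y0, hy0, hy0a⟩ := crit_in_arc hT hYne hdisj hXY hdom
    refine ⟨{a, x0, y0}, by simp, ⟨a, by simp⟩,
      cycle3_strong hax0 (hdom x0 hx0 y0 hy0) hy0a, ?_, ?_⟩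
    · exact hlt _ (by simp) a (by simp) (by simp)
    · apply hproper
      have h1 : ({a, x0, y0} : Set V).ncard ≤ 3 := by
        calc ({a, x0, y0} : Set V).ncard ≤ ({x0, y0} : Set V).ncard + 1 :=
              Set.ncard_insert_le _ _
          _ ≤ (({y0} : Set V).ncard + 1) + 1 := by
              have := Set.ncard_insert_le x0 ({y0} : Set V); omega
          _ ≤ 3 := by simp
      have h2 := Set.ncard_add_ncard_compl ({a, x0, y0} : Set V)
      rw [hcard] at h2
      omega
  · by_cases hmix : ∃ v, v ∉ S ∧ (∃ s ∈ S, T.adj s v = true) ∧ (∃ s ∈ S, T.adj v s = true)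
    · -- a mixed vertex: add it
      obtain ⟨v, hvS, ⟨s1, hs1, hs1v⟩, ⟨s2, hs2, hvs2⟩⟩ := hmix
      set S' : Set V := insert v S with hS'
      have hsub : S ⊆ S' := Set.subset_insert _ _
      have hvS' : v ∈ S' := Set.mem_insert _ _
      have hlift : ∀ p q : V, ReflTransGen (T.Rel S) p q → ReflTransGen (T.Rel S') p q :=
        fun p q => ReflTransGen.mono (fun a b (hab : T.Rel S a b) => (⟨hsub hab.1, hsub hab.2.1, hab.2.2⟩ : T.Rel S' a b)) p q
      have hSr := strong_restrict_iff.mp hS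
      have hstrong : (T.restrict S').Strong := by
        rw [strong_restrict_iff]
        have to_any : ∀ u ∈ S, ∀ w ∈ S', ReflTransGen (T.Rel S') u w := by
          intro u hu w hw
          rcases hw with hw | hw
          · exact (hlift _ _ (hSr u hu s1 hs1)).tail ⟨hsub hs1, hw ▸ hvS', hw ▸ hs1v⟩
          · exact hlift _ _ (hSr u hu w hw)
        intro u hu w hw
        rcases hu with hu | hu
        · subst hu
          rcases hw with hw | hw
          · exact hw ▸ ReflTransGen.refl
          · exact ReflTransGen.head ⟨hvS', hsub hs2, hvs2⟩ (to_any s2 hs2 w (Or.inr hw))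
        · exact to_any u hu w hw
      exact ⟨S', hsub, ⟨v, hvS', hvS⟩, hstrong, hlt _ hsub v hvS' hvS,
        hproper _ (by
          have : v ∈ Sᶜ := hvS
          have h2 : S'ᶜ = Sᶜ \ {v} := by
            rw [hS']; ext u; simp [and_comm]
          rw [h2, Set.ncard_diff_singleton_of_mem this]
          omega)⟩
    · -- no mixed vertex: O / I classification
      push_neg at hmix
      have hclass : ∀ v, v ∉ S →
          (∀ s ∈ S, T.adj s v = true) ∨ (∀ s ∈ S, T.adj v s = true) := by
        intro v hv
        by_cases hin : ∃ s ∈ S, T.adj s v = true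
        · left
          intro s hs
          rcases eq_or_ne (T.adj s v) true with h | h
          · exact h
          · have h' : T.adj v s = false := by
              rcases hmix v hv hin s hs with h''
              cases hvv : T.adj v s
              · rfl
              · exact absurd hvv h''
            exact adj_of_ne_of_not (fun he => hv (he ▸ hs)) h'
        · right
          push_neg at hin
          intro s hs
          have h' : T.adj s v = false := by
            cases hvv : T.adj s v
            · rfl
            · exact absurd hvv (hin s hs)
          exact adj_of_ne_of_not (fun he => hv (he.symm ▸ hs)) h'
      -- some vertex outside S
      have hAne : Sᶜ.Nonempty := Set.nonempty_of_ncard_ne_zero (by omega)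
      obtain ⟨a0, ha0⟩ := hAne
      -- I nonempty
      obtain ⟨i, hiS, hiI⟩ : ∃ i, i ∉ S ∧ ∀ s ∈ S, T.adj i s = true := by
        by_contra h
        push_neg at h
        have hO : ∀ v, v ∉ S → ∀ s ∈ S, T.adj s v = true := by
          intro v hv
          rcases hclass v hv with h' | h'
          · exact h'
          · obtain ⟨s, hs, hsv⟩ := h v hv
            exact absurd (h' s hs) (by simp [hsv])
        have : s0 ∉ S := by
          refine closure (fun u => u ∉ S) ?_ (hT a0 s0) ha0
          intro u w hu hadj hwS
          rw [adj_asymm (hO u hu w hwS)] at hadj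
          exact Bool.false_ne_true hadj
        exact this hs0
      -- O nonempty
      obtain ⟨o, hoS, hoO⟩ : ∃ o, o ∉ S ∧ ∀ s ∈ S, T.adj s o = true := by
        by_contra h
        push_neg at h
        have hI : ∀ v, v ∉ S → ∀ s ∈ S, T.adj v s = true := by
          intro v hv
          rcases hclass v hv with h' | h'
          · obtain ⟨s, hs, hsv⟩ := h v hv
            exact absurd (h' s hs) (by simp [hsv])
          · exact h'
        have : a0 ∈ S := by
          refine closure (fun u => u ∈ S) ?_ (hT s0 a0) hs0
          intro u w hu hadj
          by_contra hwS
          rw [adj_asymm (hI w hwS u hu)] at hadj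
          exact Bool.false_ne_true hadj
        exact ha0 this
      -- an arc from the O-class to the I-class
      obtain ⟨o', ho'S, ho'O, i', hi'S, hi'I, harc⟩ :
          ∃ o', o' ∉ S ∧ (∀ s ∈ S, T.adj s o' = true) ∧
            ∃ i', i' ∉ S ∧ (∀ s ∈ S, T.adj i' s = true) ∧ T.adj o' i' = true := by
        by_contra h
        push_neg at h
        have : s0 ∉ S ∧ (∀ s ∈ S, T.adj s s0 = true) := by
          refine closure (fun u => u ∉ S ∧ ∀ s ∈ S, T.adj s u = true) ?_ (hT o s0)
            ⟨hoS, hoO⟩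
          rintro u w ⟨huS, huO⟩ hadj
          have hwS : w ∉ S := by
            intro hwS
            rw [adj_asymm (huO w hwS)] at hadj
            exact Bool.false_ne_true hadj
          rcases hclass w hwS with h' | h'
          · exact ⟨hwS, h'⟩
          · exact absurd hadj (h u huS huO w hwS h')
        exact this.1 hs0
      have ho'i' : o' ≠ i' := by
        rintro rfl
        exact absurd (ho'O s0 hs0) (by simp [adj_asymm (hi'I s0 hs0)])
      set S' : Set V := insert o' (insert i' S) with hS'
      have hsub : S ⊆ S' := fun u hu => Or.inr (Or.inr hu)
      have hoS' : o' ∈ S' := Or.inl rfl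
      have hiS' : i' ∈ S' := Or.inr (Or.inl rfl)
      have p1 : ∀ s ∈ S, T.Rel S' s o' := fun s hs => ⟨hsub hs, hoS', ho'O s hs⟩
      have p2 : T.Rel S' o' i' := ⟨hoS', hiS', harc⟩
      have p3 : ∀ s ∈ S, T.Rel S' i' s := fun s hs => ⟨hiS', hsub hs, hi'I s hs⟩
      have hstrong : (T.restrict S').Strong := by
        rw [strong_restrict_iff]
        have to_o : ∀ u ∈ S', ReflTransGen (T.Rel S') u o' := by
          intro u hu
          rcases hu with hu | hu | hu
          · subst hu; exact ReflTransGen.refl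
          · subst hu
            exact ReflTransGen.head (p3 s0 hs0) (ReflTransGen.single (p1 s0 hs0))
          · exact ReflTransGen.single (p1 u hu)
        have from_o : ∀ w ∈ S', ReflTransGen (T.Rel S') o' w := by
          intro w hw
          rcases hw with hw | hw | hw
          · subst hw; exact ReflTransGen.refl
          · subst hw; exact ReflTransGen.single p2
          · exact ReflTransGen.head p2 (ReflTransGen.single (p3 w hw))
        exact fun v hv w hw => (to_o v hv).trans (from_o w hw)
      refine ⟨S', hsub, ⟨o', hoS', ho'S⟩, hstrong, hlt _ hsub o' hoS' ho'S, hproper _ ?_⟩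
      have e : S'ᶜ = (Sᶜ \ {i'}) \ {o'} := by
        rw [hS']; ext u
        simp only [Set.mem_compl_iff, Set.mem_insert_iff, Set.mem_diff,
          Set.mem_singleton_iff]
        tauto
      have hi'c : i' ∈ Sᶜ := hi'S
      have ho'c : o' ∈ Sᶜ \ {i'} := ⟨ho'S, ho'i'⟩
      rw [e, Set.ncard_diff_singleton_of_mem ho'c,
        Set.ncard_diff_singleton_of_mem hi'c]
      omega


lemma bool_false {p q : V} (h : T.adj p q ≠ true) : T.adj p q = false := by
  cases hv : T.adj p q
  · rfl
  · exact absurd hv h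

lemma key {n : ℕ} (hn : 4 ≤ n) (hcard : Nat.card V = n) (hT : T.Strong) :
    ∀ k : ℕ, ∀ S : Set V, Sᶜ.ncard ≤ k → (T.restrict S).Strong → S ≠ Set.univ →
      (∀ a, a ∉ S → ¬ T.Noncritical a) →
      ∃ v1 v2 : V, v1 ∉ S ∧ v2 ∉ S ∧ v1 ≠ v2 ∧ (∀ u, u ∈ S ∨ u = v1 ∨ u = v2) ∧
        T.adj v1 v2 = true ∧ ∀ s ∈ S, T.adj s v1 = true ∧ T.adj v2 s = true := by
  haveI : Finite V := (Nat.card_pos_iff.mp (by omega)).2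
  intro k
  induction k with
  | zero =>
    intro S hk _ hne _
    have : Sᶜ.Nonempty := Set.nonempty_compl.mpr hne
    have := Set.ncard_pos (Set.toFinite Sᶜ) |>.mpr this
    omega
  | succ k ih =>
    intro S hk hS hne hcrit
    have hm1 : 1 ≤ Sᶜ.ncard :=
      Set.ncard_pos (Set.toFinite Sᶜ) |>.mpr (Set.nonempty_compl.mpr hne)
    rcases Nat.lt_or_ge Sᶜ.ncard 3 with hm | hm
    · interval_cases h : Sᶜ.ncard
      · -- |A| = 1 : impossible
        exfalso
        obtain ⟨a, hSc⟩ := Set.ncard_eq_one.mp h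
        have haS : a ∉ S := by
          have : a ∈ Sᶜ := hSc ▸ rfl
          exact this
        obtain ⟨X, Y, hXne, hYne, hdisj, hXY, hdom⟩ := crit_structure (hcrit a haS)
        have hSsub : S ⊆ X ∪ Y := by
          intro u hu
          rw [hXY]
          exact fun he => haS (he ▸ hu)
        have hmem : ∀ u, u ∈ S ∨ u = a := by
          intro u
          by_cases hu : u ∈ S
          · exact Or.inl hu
          · right; have : u ∈ Sᶜ := hu; rwa [hSc] at this
        rcases strong_sub_side hS hSsub hdisj hdom with hSX | hSY
        · obtain ⟨y, hy⟩ := hYne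
          have hya : y ≠ a := by
            have : y ∈ X ∪ Y := Or.inr hy
            rw [hXY] at this; exact this
          rcases hmem y with h' | h'
          · exact Set.eq_empty_iff_forall_notMem.mp hdisj y ⟨hSX h', hy⟩
          · exact hya h'
        · obtain ⟨x, hx⟩ := hXne
          have hxa : x ≠ a := by
            have : x ∈ X ∪ Y := Or.inl hx
            rw [hXY] at this; exact this
          rcases hmem x with h' | h'
          · exact Set.eq_empty_iff_forall_notMem.mp hdisj x ⟨hx, hSY h'⟩
          · exact hxa h'
      · -- |A| = 2 : the Δ configuration
        obtain ⟨a, b, hab, hSc⟩ := Set.ncard_eq_two.mp h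
        have haS : a ∉ S := by
          have : a ∈ Sᶜ := by rw [hSc]; exact Or.inl rfl
          exact this
        have hbS : b ∉ S := by
          have : b ∈ Sᶜ := by rw [hSc]; exact Or.inr rfl
          exact this
        have huniv : ∀ u, u ∈ S ∨ u = a ∨ u = b := by
          intro u
          by_cases hu : u ∈ S
          · exact Or.inl hu
          · right; have : u ∈ Sᶜ := hu; rwa [hSc] at this
        obtain ⟨X, Y, hXne, hYne, hdisj, hXY, hdom⟩ := crit_structure (hcrit a haS)
        have hSsub : S ⊆ X ∪ Y := by
          intro u hu
          rw [hXY]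
          exact fun he => haS (he ▸ hu)
        have hne_of_memXY : ∀ u, u ∈ X ∪ Y → u ≠ a := by
          intro u hu; rw [hXY] at hu; exact hu
        obtain ⟨X', Y', hXne', hYne', hdisj', hXY', hdom'⟩ :=
          crit_structure (hcrit b hbS)
        have hSsub' : S ⊆ X' ∪ Y' := by
          intro u hu
          rw [hXY']
          exact fun he => hbS (he ▸ hu)
        have hne_of_memXY' : ∀ u, u ∈ X' ∪ Y' → u ≠ b := by
          intro u hu; rw [hXY'] at hu; exact hu
        rcases strong_sub_side hS hSsub hdisj hdom with hSX | hSY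
        · -- S ⊆ X, so Y = {b}
          have hbY : b ∈ Y := by
            obtain ⟨y, hy⟩ := hYne
            have hya : y ≠ a := hne_of_memXY y (Or.inr hy)
            have hyS : y ∉ S := fun h' =>
              Set.eq_empty_iff_forall_notMem.mp hdisj y ⟨hSX h', hy⟩
            rcases huniv y with h' | h' | h'
            · exact absurd h' hyS
            · exact absurd h' hya
            · exact h' ▸ hy
          have hdomSb : ∀ s ∈ S, T.adj s b = true := fun s hs => hdom s (hSX hs) b hbY
          -- arc b → a
          have hba : T.adj b a = true := by
            obtain ⟨w, hwb, hbw⟩ := exists_out_arc hT hab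
            rcases huniv w with h' | h' | h'
            · exact absurd hbw (by simp [adj_asymm (hdomSb w h')])
            · exact h' ▸ hbw
            · exact absurd h' hwb
          rcases strong_sub_side hS hSsub' hdisj' hdom' with hSX' | hSY'
          · -- S ⊆ X' and Y' = {a} : a dominated by all, and a has no out-arc
            exfalso
            have haY' : a ∈ Y' := by
              obtain ⟨y, hy⟩ := hYne'
              have hyb : y ≠ b := hne_of_memXY' y (Or.inr hy)
              have hyS : y ∉ S := fun h' =>
                Set.eq_empty_iff_forall_notMem.mp hdisj' y ⟨hSX' h', hy⟩
              rcases huniv y with h' | h' | h'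
              · exact absurd h' hyS
              · exact h' ▸ hy
              · exact absurd h' hyb
            have hdomSa : ∀ s ∈ S, T.adj s a = true := fun s hs =>
              hdom' s (hSX' hs) a haY'
            obtain ⟨w, hwa, haw⟩ := exists_out_arc hT hab.symm
            rcases huniv w with h' | h' | h'
            · exact absurd haw (by simp [adj_asymm (hdomSa w h')])
            · exact hwa h'
            · exact absurd haw (h' ▸ by simp [adj_asymm hba])
          · -- S ⊆ Y' and X' = {a} : a dominates S.  Conclusion with v1 = b, v2 = a.
            have haX' : a ∈ X' := by
              obtain ⟨x, hx⟩ := hXne'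
              have hxb : x ≠ b := hne_of_memXY' x (Or.inl hx)
              have hxS : x ∉ S := fun h' =>
                Set.eq_empty_iff_forall_notMem.mp hdisj' x ⟨hx, hSY' h'⟩
              rcases huniv x with h' | h' | h'
              · exact absurd h' hxS
              · exact h' ▸ hx
              · exact absurd h' hxb
            have hdomaS : ∀ s ∈ S, T.adj a s = true := fun s hs =>
              hdom' a haX' s (hSY' hs)
            exact ⟨b, a, hbS, haS, hab.symm,
              fun u => (huniv u).imp id Or.symm, hba,
              fun s hs => ⟨hdomSb s hs, hdomaS s hs⟩⟩
        · -- S ⊆ Y, so X = {b} : b dominates S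
          have hbX : b ∈ X := by
            obtain ⟨x, hx⟩ := hXne
            have hxa : x ≠ a := hne_of_memXY x (Or.inl hx)
            have hxS : x ∉ S := fun h' =>
              Set.eq_empty_iff_forall_notMem.mp hdisj x ⟨hx, hSY h'⟩
            rcases huniv x with h' | h' | h'
            · exact absurd h' hxS
            · exact absurd h' hxa
            · exact h' ▸ hx
          have hdombS : ∀ s ∈ S, T.adj b s = true := fun s hs => hdom b hbX s (hSY hs)
          -- arc a → b
          have hab' : T.adj a b = true := by
            obtain ⟨w, hwb, hwb'⟩ := exists_in_arc hT hab
            rcases huniv w with h' | h' | h'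
            · exact absurd hwb' (by simp [adj_asymm (hdombS w h')])
            · exact h' ▸ hwb'
            · exact absurd h' hwb
          rcases strong_sub_side hS hSsub' hdisj' hdom' with hSX' | hSY'
          · -- S ⊆ X', Y' = {a} : S dominates a. Conclusion with v1 = a, v2 = b.
            have haY' : a ∈ Y' := by
              obtain ⟨y, hy⟩ := hYne'
              have hyb : y ≠ b := hne_of_memXY' y (Or.inr hy)
              have hyS : y ∉ S := fun h' =>
                Set.eq_empty_iff_forall_notMem.mp hdisj' y ⟨hSX' h', hy⟩
              rcases huniv y with h' | h' | h'
              · exact absurd h' hyS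
              · exact h' ▸ hy
              · exact absurd h' hyb
            have hdomSa : ∀ s ∈ S, T.adj s a = true := fun s hs =>
              hdom' s (hSX' hs) a haY'
            exact ⟨a, b, haS, hbS, hab, huniv, hab',
              fun s hs => ⟨hdomSa s hs, hdombS s hs⟩⟩
          · -- S ⊆ Y', X' = {a} : a dominates S and has no in-arc
            exfalso
            have haX' : a ∈ X' := by
              obtain ⟨x, hx⟩ := hXne'
              have hxb : x ≠ b := hne_of_memXY' x (Or.inl hx)
              have hxS : x ∉ S := fun h' =>
                Set.eq_empty_iff_forall_notMem.mp hdisj' x ⟨hx, hSY' h'⟩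
              rcases huniv x with h' | h' | h'
              · exact absurd h' hxS
              · exact h' ▸ hx
              · exact absurd h' hxb
            have hdomaS : ∀ s ∈ S, T.adj a s = true := fun s hs =>
              hdom' a haX' s (hSY' hs)
            obtain ⟨w, hwa, hwa'⟩ := exists_in_arc hT hab.symm
            rcases huniv w with h' | h' | h'
            · exact absurd hwa' (by simp [adj_asymm (hdomaS w h')])
            · exact hwa h'
            · exact absurd hwa' (h' ▸ by simp [adj_asymm hab'])
    · -- |A| ≥ 3 : grow and use the inductive hypothesis
      exfalso
      obtain ⟨S', hsub, ⟨t, htS', htS⟩, hstrong', hlt', hne'⟩ :=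
        grow hn hcard hT hS hm hcrit
      obtain ⟨v1, v2, h1, h2, hv12, huniv', h12, harc'⟩ :=
        ih S' (by omega) hstrong' hne' (fun a ha => hcrit a (fun h' => ha (hsub h')))
      exact hcrit t htS (delta_noncrit hn hcard h1 h2 hv12 huniv' h12 harc' t htS')


end Tournament

/-- **Lemma 1.** Let `T` be a strongly connected tournament of order `n ≥ 4`
and `T_ncr` the subtournament induced by the non-critical vertices. If
`T_ncr` is strong then either `T = T_ncr` or `T = Δ(v_1, v_2, T_ncr)`;
otherwise `T_ncr` is not contained in any proper strongly connected
subtournament of `T`. -/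
theorem statement_4 (n : ℕ) (hn : 4 ≤ n) {V : Type} (T : Tournament V)
    (hcard : Nat.card V = n) (hT : T.Strong) :
    ((T.restrict {x | T.Noncritical x}).Strong →
      ({x : V | T.Noncritical x} = Set.univ ∨
        ∃ v1 v2 : V, v1 ≠ v2 ∧ ¬ T.Noncritical v1 ∧ ¬ T.Noncritical v2 ∧
          {x : V | T.Noncritical x} ∪ {v1, v2} = Set.univ ∧
          T.adj v1 v2 = true ∧
          ∀ w : V, T.Noncritical w → (T.adj w v1 = true ∧ T.adj v2 w = true))) ∧
    (¬ (T.restrict {x | T.Noncritical x}).Strong →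
      ∀ s : Set V, s ≠ Set.univ → (T.restrict s).Strong →
        ¬ {x : V | T.Noncritical x} ⊆ s) := by
  constructor
  · intro hstr
    by_cases hu : {x : V | T.Noncritical x} = Set.univ
    · exact Or.inl hu
    · right
      obtain ⟨v1, v2, h1, h2, hv12, huniv, h12, harc⟩ :=
        Tournament.key hn hcard hT _ _ le_rfl hstr hu (fun a ha => ha)
      refine ⟨v1, v2, hv12, h1, h2, ?_, h12, fun w hw => harc w hw⟩
      ext u
      simp only [Set.mem_union, Set.mem_setOf_eq, Set.mem_insert_iff,
        Set.mem_singleton_iff, Set.mem_univ, iff_true]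
      rcases huniv u with h | h | h
      · exact Or.inl h
      · exact Or.inr (Or.inl h)
      · exact Or.inr (Or.inr h)
  · intro hns s hsne hss hsub
    obtain ⟨v1, v2, h1, h2, hv12, huniv, h12, harc⟩ :=
      Tournament.key hn hcard hT _ _ le_rfl hss hsne
        (fun a ha h' => ha (hsub h'))
    have hall : s ⊆ {x : V | T.Noncritical x} :=
      fun x hx => Tournament.delta_noncrit hn hcard h1 h2 hv12 huniv h12 harc x hx
    have heq : {x : V | T.Noncritical x} = s := Set.Subset.antisymm hsub hall
    exact hns (by rw [heq]; exact hss)
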